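/- The Hausdorff dimension of the product set Can₀ × Can₀, viewed as a subset of ℝ², equals 2·log 2 / log 3, where Can₀ = {q ∈ [0,1) : for every n ∈ ℕ, ⌊3^{n+1}·q⌋ mod 3 ≠ 1}. -/

import Mathlib

/-- The Cantor-like set `Can₀` of points of `[0,1)` all of whose ternary digits
(in the floor convention `digit_n(q) = ⌊3^{n+1}·q⌋ mod 3`) differ from `1`. -/
def Can0 : Set ℝ :=
  {q : ℝ | q ∈ Set.Ico (0 : ℝ) 1 ∧ ∀ n : ℕ, ⌊(3 : ℝ) ^ (n + 1) * q⌋ % 3 ≠ 1}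

open Set MeasureTheory Filter Topology NNReal ENNReal

noncomputable section
namespace Stmt15Aux

/-- ternary digit -/
def dig (q : ℝ) (n : ℕ) : ℤ := ⌊(3:ℝ) ^ (n + 1) * q⌋ % 3

lemma floor3 (x : ℝ) : 3 * ⌊x⌋ ≤ ⌊3 * x⌋ ∧ ⌊3 * x⌋ < 3 * ⌊x⌋ + 3 := by
  constructor
  · refine Int.le_floor.mpr ?_
    push_cast
    nlinarith [Int.floor_le x]
  · refine Int.floor_lt.mpr ?_
    push_cast
    nlinarith [Int.lt_floor_add_one x]

lemma dig_eq (q : ℝ) (n : ℕ) :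
    dig q n = ⌊(3:ℝ) ^ (n + 1) * q⌋ - 3 * ⌊(3:ℝ) ^ n * q⌋ := by
  have h := floor3 ((3:ℝ) ^ n * q)
  have hx : 3 * ((3:ℝ) ^ n * q) = (3:ℝ) ^ (n+1) * q := by ring
  rw [hx] at h
  unfold dig
  omega

lemma dig_mem (q : ℝ) (n : ℕ) : 0 ≤ dig q n ∧ dig q n ≤ 2 := by
  unfold dig; omega

lemma floor_expand {q : ℝ} (hq : q ∈ Ico (0:ℝ) 1) (N : ℕ) :
    (⌊(3:ℝ) ^ N * q⌋ : ℝ) * (1/3) ^ N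
      = ∑ k ∈ Finset.range N, (dig q k : ℝ) * (1/3) ^ (k+1) := by
  induction N with
  | zero =>
    simp [Int.floor_eq_zero_iff.mpr (by simpa using hq)]
  | succ N ih =>
    have h := dig_eq q N
    have h' : ⌊(3:ℝ) ^ (N+1) * q⌋ = 3 * ⌊(3:ℝ) ^ N * q⌋ + dig q N := by omega
    have h2 : (⌊(3:ℝ) ^ (N+1) * q⌋ : ℝ) = 3 * (⌊(3:ℝ) ^ N * q⌋ : ℝ) + (dig q N : ℝ) := by
      exact_mod_cast congrArg (Int.cast : ℤ → ℝ) h'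
    rw [Finset.sum_range_succ, ← ih, h2]
    ring

lemma floor_approx (q : ℝ) (N : ℕ) :
    q - (1/3) ^ N < (⌊(3:ℝ) ^ N * q⌋ : ℝ) * (1/3) ^ N ∧
      (⌊(3:ℝ) ^ N * q⌋ : ℝ) * (1/3) ^ N ≤ q := by
  have h1 : (⌊(3:ℝ) ^ N * q⌋ : ℝ) ≤ (3:ℝ) ^ N * q := Int.floor_le _
  have h2 : (3:ℝ) ^ N * q < (⌊(3:ℝ) ^ N * q⌋ : ℝ) + 1 := Int.lt_floor_add_one _
  have h3 : (0:ℝ) < (3:ℝ) ^ N := by positivity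
  have h4 : ((1:ℝ)/3) ^ N = ((3:ℝ) ^ N)⁻¹ := by
    rw [one_div, inv_pow]
  have h5 : (0:ℝ) < ((3:ℝ) ^ N)⁻¹ := by positivity
  have h6 : (3:ℝ) ^ N * ((3:ℝ) ^ N)⁻¹ = 1 := mul_inv_cancel₀ (ne_of_gt h3)
  have h7 : (3:ℝ) ^ N * q * ((3:ℝ) ^ N)⁻¹ = q := by field_simp
  have h8 := mul_le_mul_of_nonneg_right h1 h5.le
  have h9 := mul_lt_mul_of_pos_right h2 h5
  rw [h4]
  constructor
  · rw [add_mul, one_mul, h7] at h9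
    linarith
  · rw [h7] at h8
    linarith

lemma summable_r {r : ℝ} (h0 : 0 ≤ r) (h1 : r < 1) (c : ℕ) :
    Summable (fun n : ℕ => r ^ (n + c)) := by
  simpa [pow_add] using (summable_geometric_of_lt_one h0 h1).mul_right (r ^ c)

lemma tsum_r {r : ℝ} (h0 : 0 ≤ r) (h1 : r < 1) (c : ℕ) :
    ∑' n : ℕ, r ^ (n + c) = r ^ c * (1 - r)⁻¹ := by
  calc ∑' n : ℕ, r ^ (n + c) = ∑' n : ℕ, r ^ n * r ^ c := by
        simp [pow_add]
    _ = (1 - r)⁻¹ * r ^ c := by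
        rw [_root_.tsum_mul_right, tsum_geometric_of_lt_one h0 h1]
    _ = r ^ c * (1 - r)⁻¹ := by ring

lemma tsum_third (c : ℕ) : ∑' n : ℕ, ((1:ℝ)/3) ^ (n + c) = (3/2) * (1/3) ^ c := by
  rw [tsum_r (by norm_num) (by norm_num) c]; norm_num; ring

lemma tsum_half (c : ℕ) : ∑' n : ℕ, ((1:ℝ)/2) ^ (n + c) = 2 * (1/2) ^ c := by
  rw [tsum_r (by norm_num) (by norm_num) c]; norm_num; ring

/-- the `n`-th summand of a ternary 0/2-expansion -/
def term (b : ℕ → Bool) (n : ℕ) : ℝ := (if b n then (2:ℝ) else 0) * (1/3) ^ (n + 1)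

lemma term_nonneg (b : ℕ → Bool) (n : ℕ) : 0 ≤ term b n := by
  unfold term; split <;> norm_num

lemma term_le (b : ℕ → Bool) (n : ℕ) : term b n ≤ 2 * (1/3) ^ (n + 1) := by
  unfold term; split <;> norm_num

lemma summable_term (b : ℕ → Bool) : Summable (term b) :=
  Summable.of_nonneg_of_le (term_nonneg b) (term_le b)
    (by simpa using (summable_r (r := (1:ℝ)/3) (by norm_num) (by norm_num) 1).mul_left 2)

/-- the real number with ternary digits `2·b n` -/
def sval (b : ℕ → Bool) : ℝ := ∑' n, term b n

/-- `b` does not end with a tail of `true`s -/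
def Good (b : ℕ → Bool) : Prop := ∀ N, ∃ n, N ≤ n ∧ b n = false

lemma tail_nonneg (b : ℕ → Bool) (N : ℕ) : 0 ≤ ∑' n, term b (n + N) :=
  tsum_nonneg fun n => term_nonneg b _

lemma tail_full (N : ℕ) : ∑' n : ℕ, 2 * ((1:ℝ)/3) ^ (n + N + 1) = (1/3) ^ N := by
  have : ∀ n : ℕ, 2 * ((1:ℝ)/3) ^ (n + N + 1) = 2 * (1/3) ^ (n + (N + 1)) := by
    intro n; ring_nf
  rw [tsum_congr this, _root_.tsum_mul_left, tsum_third]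
  rw [pow_succ]
  ring

lemma tail_le (b : ℕ → Bool) (N : ℕ) : ∑' n, term b (n + N) ≤ (1/3) ^ N := by
  rw [← tail_full N]
  refine Summable.tsum_le_tsum (fun n => ?_) ((summable_term b).comp_injective (add_left_injective N))
    (by simpa [tail_full, add_assoc] using (summable_r (r := (1:ℝ)/3) (by norm_num) (by norm_num) (N+1)).mul_left 2)
  simpa [add_assoc] using term_le b (n + N)

lemma tail_lt (b : ℕ → Bool) (hb : Good b) (N : ℕ) : ∑' n, term b (n + N) < (1/3) ^ N := by
  obtain ⟨n₀, hn₀, hbn₀⟩ := hb N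
  rw [← tail_full N]
  refine Summable.tsum_lt_tsum_of_nonneg (fun n => term_nonneg b _) (fun n => ?_) (i := n₀ - N) ?_
    (by simpa [tail_full, add_assoc] using (summable_r (r := (1:ℝ)/3) (by norm_num) (by norm_num) (N+1)).mul_left 2)
  · simpa [add_assoc] using term_le b (n + N)
  · have h1 : n₀ - N + N = n₀ := Nat.sub_add_cancel hn₀
    rw [h1]
    unfold term
    rw [hbn₀]
    have : (0:ℝ) < 2 * (1/3) ^ (n₀ - N + N + 1) := by positivity
    simpa [h1, hbn₀] using this

lemma sval_split (b : ℕ → Bool) (N : ℕ) :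
    sval b = ∑ k ∈ Finset.range N, term b k + ∑' n, term b (n + N) :=
  (Summable.sum_add_tsum_nat_add N (summable_term b)).symm

lemma sval_mem (b : ℕ → Bool) (hb : Good b) : sval b ∈ Ico (0:ℝ) 1 := by
  constructor
  · exact tsum_nonneg fun n => term_nonneg b n
  · have := tail_lt b hb 0
    have h0 := sval_split b 0
    simp at h0
    rw [h0]
    simpa using this

lemma term_def (b : ℕ → Bool) (n : ℕ) :
    term b n = (if b n then (2:ℝ) else 0) * (1/3) ^ (n + 1) := rfl

/-- integer partial value -/
def pz (b : ℕ → Bool) (N : ℕ) : ℤ :=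
  ∑ k ∈ Finset.range N, (if b k then (2:ℤ) else 0) * 3 ^ (N - 1 - k)

lemma pz_cast (b : ℕ → Bool) (N : ℕ) :
    (pz b N : ℝ) = 3 ^ N * ∑ k ∈ Finset.range N, term b k := by
  unfold pz
  rw [Finset.mul_sum]
  push_cast
  refine Finset.sum_congr rfl fun k hk => ?_
  have hkN : k < N := Finset.mem_range.mp hk
  have hpow : (3:ℝ) ^ (N - 1 - k) * 3 ^ (k + 1) = 3 ^ N := by
    rw [← pow_add]; congr 1; omega
  have h3 : ((3:ℝ) ^ (k + 1)) ≠ 0 := by positivity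
  rw [term_def]
  have honethird : ((1:ℝ)/3) ^ (k + 1) = ((3:ℝ) ^ (k+1))⁻¹ := by
    rw [one_div, inv_pow]
  rw [honethird]
  split <;> field_simp <;> linarith [hpow]

lemma sval_floor (b : ℕ → Bool) (hb : Good b) (N : ℕ) :
    ⌊(3:ℝ) ^ N * sval b⌋ = pz b N := by
  have hT0 := tail_nonneg b N
  have hT1 := tail_lt b hb N
  have hs := sval_split b N
  have h3 : (0:ℝ) < 3 ^ N := by positivity
  refine Int.floor_eq_iff.mpr ?_
  rw [pz_cast b N]
  constructor
  · rw [hs]; nlinarith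
  · rw [hs]
    have : (3:ℝ) ^ N * ∑' n, term b (n + N) < 1 := by
      have := mul_lt_mul_of_pos_left hT1 h3
      have hone : (3:ℝ) ^ N * (1/3) ^ N = 1 := by
        rw [one_div, inv_pow, mul_inv_cancel₀ (ne_of_gt h3)]
      linarith
    nlinarith

lemma pz_succ (b : ℕ → Bool) (N : ℕ) :
    pz b (N + 1) = 3 * pz b N + (if b N then 2 else 0) := by
  unfold pz
  rw [Finset.sum_range_succ]
  have h1 : (N + 1) - 1 - N = 0 := by omega
  rw [h1, pow_zero, mul_one, Finset.mul_sum]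
  congr 1
  refine Finset.sum_congr rfl fun k hk => ?_
  have hkN : k < N := Finset.mem_range.mp hk
  have : (3:ℤ) ^ (N + 1 - 1 - k) = 3 * 3 ^ (N - 1 - k) := by
    rw [← pow_succ']; congr 1; omega
  rw [this]; ring

lemma sval_dig (b : ℕ → Bool) (hb : Good b) (n : ℕ) :
    ⌊(3:ℝ) ^ (n + 1) * sval b⌋ % 3 = if b n then 2 else 0 := by
  rw [sval_floor b hb (n + 1), pz_succ]
  split <;> omega

/-- binary digit -/
def dig2 (x : ℝ) (n : ℕ) : ℤ := ⌊(2:ℝ) ^ (n + 1) * x⌋ % 2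

lemma floor2 (x : ℝ) : 2 * ⌊x⌋ ≤ ⌊2 * x⌋ ∧ ⌊2 * x⌋ < 2 * ⌊x⌋ + 2 := by
  constructor
  · refine Int.le_floor.mpr ?_
    push_cast
    nlinarith [Int.floor_le x]
  · refine Int.floor_lt.mpr ?_
    push_cast
    nlinarith [Int.lt_floor_add_one x]

lemma dig2_eq (x : ℝ) (n : ℕ) :
    dig2 x n = ⌊(2:ℝ) ^ (n + 1) * x⌋ - 2 * ⌊(2:ℝ) ^ n * x⌋ := by
  have h := floor2 ((2:ℝ) ^ n * x)
  have hx : 2 * ((2:ℝ) ^ n * x) = (2:ℝ) ^ (n + 1) * x := by ring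
  rw [hx] at h
  unfold dig2
  omega

lemma dig2_mem (x : ℝ) (n : ℕ) : 0 ≤ dig2 x n ∧ dig2 x n ≤ 1 := by
  unfold dig2; omega

lemma floor_expand2 {x : ℝ} (hx : x ∈ Ico (0:ℝ) 1) (N : ℕ) :
    (⌊(2:ℝ) ^ N * x⌋ : ℝ) * (1/2) ^ N
      = ∑ k ∈ Finset.range N, (dig2 x k : ℝ) * (1/2) ^ (k + 1) := by
  induction N with
  | zero => simp [Int.floor_eq_zero_iff.mpr (by simpa using hx)]
  | succ N ih =>
    have h := dig2_eq x N
    have h' : ⌊(2:ℝ) ^ (N+1) * x⌋ = 2 * ⌊(2:ℝ) ^ N * x⌋ + dig2 x N := by omega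
    have h2 : (⌊(2:ℝ) ^ (N+1) * x⌋ : ℝ) = 2 * (⌊(2:ℝ) ^ N * x⌋ : ℝ) + (dig2 x N : ℝ) := by
      exact_mod_cast congrArg (Int.cast : ℤ → ℝ) h'
    rw [Finset.sum_range_succ, ← ih, h2]
    ring

lemma floor_approx2 (x : ℝ) (N : ℕ) :
    x - (1/2) ^ N < (⌊(2:ℝ) ^ N * x⌋ : ℝ) * (1/2) ^ N ∧
      (⌊(2:ℝ) ^ N * x⌋ : ℝ) * (1/2) ^ N ≤ x := by
  have h1 : (⌊(2:ℝ) ^ N * x⌋ : ℝ) ≤ (2:ℝ) ^ N * x := Int.floor_le _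
  have h2 : (2:ℝ) ^ N * x < (⌊(2:ℝ) ^ N * x⌋ : ℝ) + 1 := Int.lt_floor_add_one _
  have h3 : (0:ℝ) < (2:ℝ) ^ N := by positivity
  have h4 : ((1:ℝ)/2) ^ N = ((2:ℝ) ^ N)⁻¹ := by rw [one_div, inv_pow]
  have h5 : (0:ℝ) < ((2:ℝ) ^ N)⁻¹ := by positivity
  have h7 : (2:ℝ) ^ N * x * ((2:ℝ) ^ N)⁻¹ = x := by field_simp
  have h8 := mul_le_mul_of_nonneg_right h1 h5.le
  have h9 := mul_lt_mul_of_pos_right h2 h5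
  rw [h4]
  constructor
  · rw [add_mul, one_mul, h7] at h9; linarith
  · rw [h7] at h8; linarith

def term2 (x : ℝ) (n : ℕ) : ℝ := (dig2 x n : ℝ) * (1/2) ^ (n + 1)

lemma term2_nonneg (x : ℝ) (n : ℕ) : 0 ≤ term2 x n := by
  unfold term2
  have := dig2_mem x n
  have h : (0:ℝ) ≤ (dig2 x n : ℝ) := by exact_mod_cast this.1
  positivity

lemma term2_le (x : ℝ) (n : ℕ) : term2 x n ≤ (1/2) ^ (n + 1) := by
  unfold term2
  have := dig2_mem x n
  have h : (dig2 x n : ℝ) ≤ 1 := by exact_mod_cast this.2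
  nlinarith [pow_pos (by norm_num : (0:ℝ) < 1/2) (n+1)]

lemma summable_term2 (x : ℝ) : Summable (term2 x) :=
  Summable.of_nonneg_of_le (term2_nonneg x) (term2_le x)
    (by simpa [pow_add] using (summable_geometric_of_lt_one (by norm_num : (0:ℝ) ≤ 1/2)
      (by norm_num)).mul_right ((1:ℝ)/2))

lemma tsum_term2 {x : ℝ} (hx : x ∈ Ico (0:ℝ) 1) : ∑' n, term2 x n = x := by
  have hpart : ∀ N, ∑ k ∈ Finset.range N, term2 x k = (⌊(2:ℝ) ^ N * x⌋ : ℝ) * (1/2) ^ N :=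
    fun N => (floor_expand2 hx N).symm
  have htend : Tendsto (fun N => ∑ k ∈ Finset.range N, term2 x k) atTop (𝓝 x) := by
    have hb : Tendsto (fun N : ℕ => x - ((1:ℝ)/2) ^ N) atTop (𝓝 x) := by
      have : Tendsto (fun N : ℕ => ((1:ℝ)/2) ^ N) atTop (𝓝 0) :=
        tendsto_pow_atTop_nhds_zero_of_lt_one (by norm_num) (by norm_num)
      simpa using (tendsto_const_nhds (x := x)).sub this
    refine tendsto_of_tendsto_of_tendsto_of_le_of_le hb tendsto_const_nhds ?_ ?_
    · intro N; simp only []; rw [hpart]; exact (floor_approx2 x N).1.le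
    · intro N; simp only []; rw [hpart]; exact (floor_approx2 x N).2
  exact tendsto_nhds_unique ((summable_term2 x).hasSum.tendsto_sum_nat) htend

/-- the booleans recording the binary digits of `x` -/
def bb (x : ℝ) (n : ℕ) : Bool := decide (dig2 x n = 1)

lemma bb_good {x : ℝ} (hx : x ∈ Ico (0:ℝ) 1) : ∀ N, ∃ n, N ≤ n ∧ bb x n = false := by
  intro N
  by_contra h
  push_neg at h
  have hall : ∀ n, N ≤ n → dig2 x n = 1 := by
    intro n hn
    have := h n hn
    simpa [bb] using this
  have hsplit := Summable.sum_add_tsum_nat_add (f := term2 x) N (summable_term2 x)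
  have htail : ∑' n : ℕ, term2 x (n + N) = (1/2) ^ N := by
    have : ∀ n : ℕ, term2 x (n + N) = ((1:ℝ)/2) ^ (n + (N + 1)) := by
      intro n
      unfold term2
      rw [hall (n + N) (by omega)]
      push_cast
      ring_nf
    rw [tsum_congr this, tsum_half (N + 1), pow_succ]
    ring
  have hx2 := tsum_term2 hx
  rw [← hsplit, htail] at hx2
  have hap := (floor_approx2 x N).1
  rw [floor_expand2 hx N] at hap
  have hpartsum : ∑ k ∈ Finset.range N, (dig2 x k : ℝ) * (1/2) ^ (k + 1)
      = ∑ i ∈ Finset.range N, term2 x i := rfl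
  rw [hpartsum] at hap
  have hpow : (0:ℝ) < (1/2) ^ N := by positivity
  linarith
/-- summand of the Cantor–Lebesgue function -/
def gterm (q : ℝ) (n : ℕ) : ℝ := (if dig q n = 2 then (1:ℝ) else 0) * (1/2) ^ (n + 1)

lemma gterm_nonneg (q : ℝ) (n : ℕ) : 0 ≤ gterm q n := by
  unfold gterm; split <;> positivity

lemma gterm_le (q : ℝ) (n : ℕ) : gterm q n ≤ (1/2) ^ (n + 1) := by
  unfold gterm
  split <;> simp

lemma summable_gterm (q : ℝ) : Summable (gterm q) :=
  Summable.of_nonneg_of_le (gterm_nonneg q) (gterm_le q)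
    (by simpa [pow_add] using (summable_geometric_of_lt_one (by norm_num : (0:ℝ) ≤ 1/2)
      (by norm_num)).mul_right ((1:ℝ)/2))

/-- the Cantor–Lebesgue function -/
def g (q : ℝ) : ℝ := ∑' n, gterm q n

/-- If the first `k` ternary digits agree, `g`-values differ by at most `2⁻ᵏ`. -/
lemma g_diff {q q' : ℝ} (k : ℕ) (hk : ∀ n < k, dig q n = dig q' n) :
    |g q - g q'| ≤ (1/2) ^ k := by
  have hsq := (Summable.sum_add_tsum_nat_add (f := gterm q) k (summable_gterm q)).symm
  have hsq' := (Summable.sum_add_tsum_nat_add (f := gterm q') k (summable_gterm q')).symm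
  have hsum : ∑ i ∈ Finset.range k, gterm q i = ∑ i ∈ Finset.range k, gterm q' i := by
    refine Finset.sum_congr rfl fun i hi => ?_
    unfold gterm
    rw [hk i (Finset.mem_range.mp hi)]
  have htail : ∀ r : ℝ, (∀ n : ℕ, dig r n = dig r n) →
      0 ≤ ∑' n : ℕ, gterm r (n + k) ∧ ∑' n : ℕ, gterm r (n + k) ≤ (1/2) ^ k := by
    intro r _
    constructor
    · exact tsum_nonneg fun n => gterm_nonneg r _
    · have hfull : ∑' n : ℕ, ((1:ℝ)/2) ^ (n + k + 1) = (1/2) ^ k := by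
        have : ∀ n : ℕ, ((1:ℝ)/2) ^ (n + k + 1) = ((1:ℝ)/2) ^ (n + (k + 1)) := by
          intro n; ring_nf
        rw [tsum_congr this, tsum_half (k+1), pow_succ]; ring
      rw [← hfull]
      refine Summable.tsum_le_tsum (fun n => ?_)
        ((summable_gterm r).comp_injective (add_left_injective k)) ?_
      · simpa [add_assoc] using gterm_le r (n + k)
      · have hs : Summable (fun n : ℕ => ((1:ℝ)/2) ^ (n + (k+1))) := by
          simpa [pow_add] using (summable_geometric_of_lt_one (by norm_num : (0:ℝ) ≤ 1/2)
            (by norm_num)).mul_right (((1:ℝ)/2) ^ (k+1))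
        exact hs.congr (fun n => by rw [← add_assoc])
  have h1 := htail q (fun n => rfl)
  have h2 := htail q' (fun n => rfl)
  rw [abs_le]
  unfold g
  rw [hsq, hsq', hsum]
  constructor <;> linarith [h1.1, h1.2, h2.1, h2.2]

/-- key separation estimate: Hölder continuity pointwise -/
lemma g_holder_pt {q q' : ℝ} (hq : q ∈ Can0) (hq' : q' ∈ Can0) (h : q < q') :
    |g q - g q'| ≤ 2 * (q' - q) ^ (Real.log 2 / Real.log 3) := by
  set α := Real.log 2 / Real.log 3 with hα
  have hαpos : 0 < α := by
    apply div_pos (Real.log_pos (by norm_num)) (Real.log_pos (by norm_num))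
  have h32 : (3:ℝ) ^ (α:ℝ) = 2 := by
    rw [Real.rpow_def_of_pos (by norm_num : (0:ℝ) < 3)]
    have hlog3 : Real.log 3 ≠ 0 := ne_of_gt (Real.log_pos (by norm_num))
    have : Real.log 3 * α = Real.log 2 := by
      rw [hα]; field_simp
    rw [this, Real.exp_log (by norm_num)]
  have h13 : ((1:ℝ)/3) ^ (α : ℝ) = 1/2 := by
    rw [one_div, Real.inv_rpow (by norm_num : (0:ℝ) ≤ 3), h32, one_div]
  have h3α : ∀ j : ℕ, (((1:ℝ)/3) ^ j) ^ (α:ℝ) = (1/2) ^ j := by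
    intro j
    rw [← Real.rpow_natCast ((1:ℝ)/3) j, ← Real.rpow_mul (by norm_num : (0:ℝ) ≤ 1/3),
      mul_comm, Real.rpow_mul (by norm_num : (0:ℝ) ≤ 1/3), h13,
      Real.rpow_natCast]
  -- find the first level where the floors differ
  have hex : ∃ k : ℕ, ⌊(3:ℝ) ^ (k+1) * q⌋ ≠ ⌊(3:ℝ) ^ (k+1) * q'⌋ := by
    obtain ⟨n, hn⟩ := pow_unbounded_of_one_lt (q' - q)⁻¹ (by norm_num : (1:ℝ) < 3)
    refine ⟨n, ?_⟩
    have hqq : 0 < q' - q := by linarith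
    have h1 : 1 < (3:ℝ) ^ n * (q' - q) := by
      rw [inv_lt_iff_one_lt_mul₀ hqq] at hn
      linarith [hn]
    have h2 : (3:ℝ) ^ n * (q' - q) ≤ 3 ^ (n+1) * (q' - q) := by
      have : (3:ℝ) ^ n ≤ 3 ^ (n+1) := by
        apply pow_le_pow_right₀ (by norm_num)
        omega
      nlinarith
    intro heq
    have hfl : (⌊(3:ℝ) ^ (n+1) * q⌋ : ℝ) ≤ (3:ℝ) ^ (n+1) * q := Int.floor_le _
    have hfl2 : (3:ℝ) ^ (n+1) * q' < (⌊(3:ℝ) ^ (n+1) * q'⌋ : ℝ) + 1 := Int.lt_floor_add_one _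
    rw [← heq] at hfl2
    nlinarith
  classical
  set k := Nat.find hex with hkdef
  have hPk : ⌊(3:ℝ) ^ (k+1) * q⌋ ≠ ⌊(3:ℝ) ^ (k+1) * q'⌋ := Nat.find_spec hex
  have hmin : ∀ j < k, ⌊(3:ℝ) ^ (j+1) * q⌋ = ⌊(3:ℝ) ^ (j+1) * q'⌋ := by
    intro j hj
    have := Nat.find_min hex hj
    simpa using this
  have hgd : |g q - g q'| ≤ (1/2) ^ k := by
    apply g_diff k
    intro n hn
    unfold dig
    rw [hmin n hn]
  -- the common floor at level k
  have hm : ⌊(3:ℝ) ^ k * q⌋ = ⌊(3:ℝ) ^ k * q'⌋ := by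
    rcases Nat.eq_zero_or_pos k with hk0 | hkpos
    · rw [hk0]
      simp only [pow_zero, one_mul]
      rw [Int.floor_eq_zero_iff.mpr (by simpa using hq.1),
        Int.floor_eq_zero_iff.mpr (by simpa using hq'.1)]
    · obtain ⟨j, hj⟩ := Nat.exists_eq_add_of_lt hkpos
      have hjk : j < k := by omega
      have := hmin j hjk
      rw [hj]
      simpa [Nat.zero_add] using this
  set m := ⌊(3:ℝ) ^ k * q⌋ with hmdef
  have hdq := dig_eq q k
  have hdq' := dig_eq q' k
  have hd1 : dig q k ≠ 1 := hq.2 k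
  have hd1' : dig q' k ≠ 1 := hq'.2 k
  have hdm := dig_mem q k
  have hdm' := dig_mem q' k
  have hmono : ⌊(3:ℝ) ^ (k+1) * q⌋ ≤ ⌊(3:ℝ) ^ (k+1) * q'⌋ := by
    apply Int.floor_le_floor
    have : (0:ℝ) < 3 ^ (k+1) := by positivity
    nlinarith
  have hdig0 : dig q k = 0 ∧ dig q' k = 2 := by
    omega
  -- separation
  have hsep : ((1:ℝ)/3) ^ (k+1) ≤ q' - q := by
    have hfq : ⌊(3:ℝ) ^ (k+1) * q⌋ = 3 * m + 0 := by omega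
    have hfq' : ⌊(3:ℝ) ^ (k+1) * q'⌋ = 3 * m + 2 := by
      omega
    have hub : (3:ℝ) ^ (k+1) * q < (3 * m : ℝ) + 1 := by
      have := Int.lt_floor_add_one ((3:ℝ) ^ (k+1) * q)
      rw [hfq] at this
      push_cast at this
      linarith
    have hlb : (3 * m : ℝ) + 2 ≤ (3:ℝ) ^ (k+1) * q' := by
      have := Int.floor_le ((3:ℝ) ^ (k+1) * q')
      rw [hfq'] at this
      push_cast at this
      linarith
    have h3p : (0:ℝ) < 3 ^ (k+1) := by positivity
    have : 1 < (3:ℝ) ^ (k+1) * (q' - q) := by nlinarith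
    have h4 : ((1:ℝ)/3) ^ (k+1) = ((3:ℝ) ^ (k+1))⁻¹ := by rw [one_div, inv_pow]
    rw [h4]
    rw [inv_le_iff_one_le_mul₀ h3p]
    nlinarith
  -- conclude
  have hfinal : ((1:ℝ)/2) ^ k = 2 * (((1:ℝ)/3) ^ (k+1)) ^ (α:ℝ) := by
    rw [h3α (k+1), pow_succ]
    ring
  have hr : (((1:ℝ)/3) ^ (k+1)) ^ (α:ℝ) ≤ (q' - q) ^ (α:ℝ) :=
    Real.rpow_le_rpow (by positivity) hsep hαpos.le
  calc |g q - g q'| ≤ (1/2) ^ k := hgd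
    _ = 2 * (((1:ℝ)/3) ^ (k+1)) ^ (α:ℝ) := hfinal
    _ ≤ 2 * (q' - q) ^ (α:ℝ) := by linarith


lemma sval_can0 {b : ℕ → Bool} (hb : Good b) : sval b ∈ Can0 := by
  refine ⟨sval_mem b hb, fun n => ?_⟩
  rw [sval_dig b hb n]
  split <;> norm_num

lemma g_surj : Ico (0:ℝ) 1 ⊆ g '' Can0 := by
  intro x hx
  have hgood : Good (bb x) := bb_good hx
  refine ⟨sval (bb x), sval_can0 hgood, ?_⟩
  have hcong : ∀ n, gterm (sval (bb x)) n = term2 x n := by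
    intro n
    unfold gterm term2
    have hdig : dig (sval (bb x)) n = if bb x n then 2 else 0 := sval_dig (bb x) hgood n
    rw [hdig]
    by_cases hbn : bb x n
    · have hd2 : dig2 x n = 1 := of_decide_eq_true hbn
      simp [hbn, hd2]
    · have hd2 : dig2 x n ≠ 1 := by
        intro hcon
        exact hbn (by simp [bb, hcon])
      have hmem := dig2_mem x n
      have hd0 : dig2 x n = 0 := by omega
      simp [hbn, hd0]
  calc g (sval (bb x)) = ∑' n, term2 x n := tsum_congr hcong
    _ = x := tsum_term2 hx

def nnα : ℝ≥0 := Real.toNNReal (Real.log 2 / Real.log 3)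

lemma nnα_pos : 0 < nnα := by
  unfold nnα
  rw [Real.toNNReal_pos]
  exact div_pos (Real.log_pos (by norm_num)) (Real.log_pos (by norm_num))

lemma nnα_coe : (nnα : ℝ) = Real.log 2 / Real.log 3 := by
  unfold nnα
  rw [Real.coe_toNNReal]
  positivity

lemma g_holder : HolderOnWith 2 nnα g Can0 := by
  intro q hq q' hq'
  have habs : |g q - g q'| ≤ 2 * |q - q'| ^ (Real.log 2 / Real.log 3) := by
    rcases lt_trichotomy q q' with hlt | heq | hgt
    · have h0 := g_holder_pt hq hq' hlt
      have hqq : |q - q'| = q' - q := by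
        rw [abs_sub_comm]; exact abs_of_nonneg (by linarith)
      rw [hqq]; exact h0
    · rw [heq]
      simp only [sub_self, abs_zero]
      have : (0:ℝ) ≤ 2 * 0 ^ (Real.log 2 / Real.log 3) := by positivity
      linarith
    · have h0 := g_holder_pt hq' hq hgt
      have hqq : |q - q'| = q - q' := abs_of_nonneg (by linarith)
      rw [abs_sub_comm] at h0
      rw [hqq]; exact h0
  rw [edist_dist, edist_dist, Real.dist_eq, Real.dist_eq]
  calc ENNReal.ofReal |g q - g q'|
      ≤ ENNReal.ofReal (2 * |q - q'| ^ (Real.log 2 / Real.log 3)) :=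
        ENNReal.ofReal_le_ofReal habs
    _ = 2 * ENNReal.ofReal (|q - q'| ^ (Real.log 2 / Real.log 3)) := by
        rw [ENNReal.ofReal_mul (by norm_num)]
        norm_num
    _ = 2 * ENNReal.ofReal |q - q'| ^ (nnα : ℝ) := by
        rw [ENNReal.ofReal_rpow_of_nonneg (abs_nonneg _) (by rw [nnα_coe]; positivity), nnα_coe]
    _ = (2 : ℝ≥0) * ENNReal.ofReal |q - q'| ^ (nnα : ℝ) := by norm_num

lemma F_holder : HolderOnWith 2 nnα (Prod.map g g) (Can0 ×ˢ Can0) := by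
  intro p hp p' hp'
  rw [Prod.edist_eq, Prod.edist_eq]
  have h1 := g_holder p.1 hp.1 p'.1 hp'.1
  have h2 := g_holder p.2 hp.2 p'.2 hp'.2
  refine max_le (h1.trans ?_) (h2.trans ?_)
  · gcongr
    exact le_max_left _ _
  · gcongr
    exact le_max_right _ _

open scoped MeasureTheory

lemma lower_bound :
    ENNReal.ofReal (2 * Real.log 2 / Real.log 3) ≤ dimH (Can0 ×ˢ Can0 : Set (ℝ × ℝ)) := by
  have him : (Ico (0:ℝ) 1 ×ˢ Ico (0:ℝ) 1 : Set (ℝ × ℝ)) ⊆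
      Prod.map g g '' (Can0 ×ˢ Can0) := by
    have h1 : (Ico (0:ℝ) 1 ×ˢ Ico (0:ℝ) 1 : Set (ℝ × ℝ)) ⊆ (g '' Can0) ×ˢ (g '' Can0) :=
      Set.prod_mono g_surj g_surj
    rwa [prod_image_image_eq] at h1
  have hdim2 : dimH (Ico (0:ℝ) 1 ×ˢ Ico (0:ℝ) 1 : Set (ℝ × ℝ)) = 2 := by
    have h := Real.dimH_of_nonempty_interior (s := (Ico (0:ℝ) 1 ×ˢ Ico (0:ℝ) 1 : Set (ℝ × ℝ))) ?_
    · rw [h, Module.finrank_prod, Module.finrank_self]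
      norm_num
    · refine ⟨((1:ℝ)/2, (1:ℝ)/2), ?_⟩
      apply interior_maximal (Set.prod_mono Ioo_subset_Ico_self Ioo_subset_Ico_self)
        (isOpen_Ioo.prod isOpen_Ioo)
      constructor <;> constructor <;> norm_num
  have hchain : (2 : ℝ≥0∞) ≤ dimH (Can0 ×ˢ Can0 : Set (ℝ × ℝ)) / nnα := by
    calc (2:ℝ≥0∞) = dimH (Ico (0:ℝ) 1 ×ˢ Ico (0:ℝ) 1 : Set (ℝ × ℝ)) := hdim2.symm
      _ ≤ dimH (Prod.map g g '' (Can0 ×ˢ Can0)) := dimH_mono him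
      _ ≤ dimH (Can0 ×ˢ Can0 : Set (ℝ × ℝ)) / nnα := F_holder.dimH_image_le nnα_pos
  rw [ENNReal.le_div_iff_mul_le (Or.inl (by exact_mod_cast nnα_pos.ne'))
    (Or.inl ENNReal.coe_ne_top)] at hchain
  refine le_trans (le_of_eq ?_) hchain
  have h1 : 2 * Real.log 2 / Real.log 3 = 2 * (Real.log 2 / Real.log 3) := by ring
  rw [h1, ENNReal.ofReal_mul (by norm_num)]
  have h2 : ENNReal.ofReal (Real.log 2 / Real.log 3) = (nnα : ℝ≥0∞) := rfl
  rw [h2]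
  norm_num

end Stmt15Aux

namespace Stmt15Aux

/-- left endpoint of the interval with digits `a` -/
def cval {n : ℕ} (a : Fin n → Bool) : ℝ :=
  ∑ k ∈ Finset.range n, (if h : k < n then (if a ⟨k, h⟩ then (2:ℝ) else 0) else 0) * (1/3) ^ (k+1)

lemma cover (n : ℕ) :
    Can0 ⊆ ⋃ a : Fin n → Bool, Icc (cval a) (cval a + (1/3) ^ n) := by
  intro q hq
  set a : Fin n → Bool := fun k => decide (dig q k.1 = 2) with ha
  have hca : cval a = (⌊(3:ℝ) ^ n * q⌋ : ℝ) * (1/3) ^ n := by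
    rw [floor_expand hq.1 n]
    unfold cval
    refine Finset.sum_congr rfl fun k hk => ?_
    have hkn : k < n := Finset.mem_range.mp hk
    rw [dif_pos hkn]
    have hd := dig_mem q k
    have hd1 : dig q k ≠ 1 := hq.2 k
    have : dig q k = 0 ∨ dig q k = 2 := by omega
    rcases this with h0 | h2
    · simp [ha, h0]
    · simp [ha, h2]
  refine mem_iUnion.mpr ⟨a, ?_⟩
  rw [hca]
  have := floor_approx q n
  constructor
  · exact this.2
  · linarith [this.1]

/-- the exponent -/
def dd : ℝ := 2 * Real.log 2 / Real.log 3

lemma dd_nonneg : 0 ≤ dd := by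
  unfold dd
  have := Real.log_pos (by norm_num : (1:ℝ) < 2)
  have := Real.log_pos (by norm_num : (1:ℝ) < 3)
  positivity

lemma third_rpow : ((1:ℝ)/3) ^ dd = 1/4 := by
  have h3 : (3:ℝ) ^ dd = 4 := by
    rw [Real.rpow_def_of_pos (by norm_num : (0:ℝ) < 3)]
    have hlog3 : Real.log 3 ≠ 0 := ne_of_gt (Real.log_pos (by norm_num))
    have h1 : Real.log 3 * dd = Real.log 4 := by
      unfold dd
      have h4 : Real.log 4 = 2 * Real.log 2 := by
        rw [show (4:ℝ) = 2 ^ (2:ℕ) by norm_num, Real.log_pow]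
        push_cast; ring
      field_simp
      linarith [h4]
    rw [h1, Real.exp_log (by norm_num)]
  rw [one_div, Real.inv_rpow (by norm_num : (0:ℝ) ≤ 3), h3]
  norm_num

/-- covering rectangles -/
def rect (n : ℕ) (i : (Fin n → Bool) × (Fin n → Bool)) : Set (ℝ × ℝ) :=
  (Icc (cval i.1) (cval i.1 + (1/3) ^ n)) ×ˢ (Icc (cval i.2) (cval i.2 + (1/3) ^ n))

lemma rect_cover (n : ℕ) : (Can0 ×ˢ Can0 : Set (ℝ × ℝ)) ⊆ ⋃ i, rect n i := by
  rintro ⟨x, y⟩ ⟨hx, hy⟩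
  obtain ⟨sa, ⟨a, rfl⟩, hxa⟩ := cover n hx
  obtain ⟨sb, ⟨b, rfl⟩, hyb⟩ := cover n hy
  exact mem_iUnion.mpr ⟨(a, b), ⟨hxa, hyb⟩⟩

lemma rect_diam (n : ℕ) (i : (Fin n → Bool) × (Fin n → Bool)) :
    EMetric.diam (rect n i) ≤ ENNReal.ofReal ((1/3) ^ n) := by
  refine EMetric.diam_le fun p hp q hq => ?_
  rw [Prod.edist_eq]
  have key : ∀ (c u v : ℝ), u ∈ Icc c (c + (1/3)^n) → v ∈ Icc c (c + (1/3)^n) →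
      edist u v ≤ ENNReal.ofReal ((1/3) ^ n) := by
    intro c u v hu hv
    rw [edist_dist]
    refine ENNReal.ofReal_le_ofReal ?_
    rw [Real.dist_eq, abs_le]
    obtain ⟨hu1, hu2⟩ := hu
    obtain ⟨hv1, hv2⟩ := hv
    constructor <;> linarith
  exact max_le (key _ _ _ hp.1 hq.1) (key _ _ _ hp.2 hq.2)

lemma upper_bound : dimH (Can0 ×ˢ Can0 : Set (ℝ × ℝ)) ≤ ENNReal.ofReal dd := by
  borelize (ℝ × ℝ)
  set nnd : ℝ≥0 := Real.toNNReal dd with hnnd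
  have hcoe : ((nnd : ℝ≥0∞)) = ENNReal.ofReal dd := rfl
  have hcoer : ((nnd : ℝ) : ℝ) = dd := Real.coe_toNNReal _ dd_nonneg
  rw [← hcoe]
  refine dimH_le_of_hausdorffMeasure_ne_top (s := (Can0 ×ˢ Can0 : Set (ℝ × ℝ))) (d := nnd) ?_
  have hmeas : μH[(nnd : ℝ)] (Can0 ×ˢ Can0 : Set (ℝ × ℝ)) ≤ 1 := by
    have hle := MeasureTheory.Measure.hausdorffMeasure_le_liminf_sum (nnd : ℝ)
      (Can0 ×ˢ Can0 : Set (ℝ × ℝ)) (l := atTop)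
      (fun n => ENNReal.ofReal ((1/3) ^ n)) ?_ rect
      (Eventually.of_forall rect_diam) (Eventually.of_forall rect_cover)
    · refine hle.trans ?_
      have hbound : ∀ n : ℕ,
          (∑ i : (Fin n → Bool) × (Fin n → Bool), EMetric.diam (rect n i) ^ (nnd : ℝ)) ≤ 1 := by
        intro n
        have hterm : ∀ i : (Fin n → Bool) × (Fin n → Bool),
            EMetric.diam (rect n i) ^ (nnd : ℝ) ≤ ENNReal.ofReal ((1/4) ^ n) := by
          intro i
          calc EMetric.diam (rect n i) ^ (nnd : ℝ)
              ≤ (ENNReal.ofReal ((1/3) ^ n)) ^ (nnd : ℝ) :=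
                ENNReal.rpow_le_rpow (rect_diam n i) nnd.coe_nonneg
            _ = ENNReal.ofReal (((1/3 : ℝ) ^ n) ^ (nnd : ℝ)) :=
                ENNReal.ofReal_rpow_of_nonneg (by positivity) (by rw [hcoer]; exact dd_nonneg)
            _ = ENNReal.ofReal ((1/4) ^ n) := by
                congr 1
                rw [← Real.rpow_natCast ((1:ℝ)/3) n, ← Real.rpow_mul (by norm_num),
                  mul_comm, Real.rpow_mul (by norm_num), hcoer, third_rpow,
                  Real.rpow_natCast]
        calc (∑ i : (Fin n → Bool) × (Fin n → Bool), EMetric.diam (rect n i) ^ (nnd : ℝ))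
            ≤ ∑ _i : (Fin n → Bool) × (Fin n → Bool), ENNReal.ofReal ((1/4) ^ n) :=
              Finset.sum_le_sum (fun i _ => hterm i)
          _ = (Fintype.card ((Fin n → Bool) × (Fin n → Bool)) : ℝ≥0∞)
                * ENNReal.ofReal ((1/4) ^ n) := by
              rw [Finset.sum_const, nsmul_eq_mul, Finset.card_univ]
          _ = 1 := by
              rw [Fintype.card_prod, Fintype.card_fun, Fintype.card_fin, Fintype.card_bool]
              have h2 : (2:ℕ) ^ n * 2 ^ n = 4 ^ n := by rw [← mul_pow]; norm_num
              rw [h2]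
              have h4 : (((4:ℕ) ^ n : ℕ) : ℝ≥0∞) = ENNReal.ofReal ((4:ℝ) ^ n) := by
                rw [ENNReal.ofReal_pow (by norm_num : (0:ℝ) ≤ 4)]
                push_cast
                norm_num
              rw [h4, ← ENNReal.ofReal_mul (by positivity), ← mul_pow]
              norm_num
      calc liminf (fun n => ∑ i : (Fin n → Bool) × (Fin n → Bool),
              EMetric.diam (rect n i) ^ (nnd : ℝ)) atTop
          ≤ liminf (fun _ : ℕ => (1 : ℝ≥0∞)) atTop :=
            liminf_le_liminf (Eventually.of_forall hbound)
        _ = 1 := liminf_const 1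
    · have h1 : Tendsto (fun n : ℕ => ((1:ℝ)/3) ^ n) atTop (𝓝 0) :=
        tendsto_pow_atTop_nhds_zero_of_lt_one (by norm_num) (by norm_num)
      have h2 := ENNReal.tendsto_ofReal h1
      simpa using h2
  intro htop
  rw [htop] at hmeas
  exact (by norm_num : ¬ ((⊤:ℝ≥0∞) ≤ 1)) hmeas

lemma final :
    dimH (Can0 ×ˢ Can0 : Set (ℝ × ℝ)) =
      ENNReal.ofReal (2 * Real.log 2 / Real.log 3) :=
  le_antisymm upper_bound lower_bound

end Stmt15Aux
end

/-- the Hausdorff dimension of the trapped set `Can₀ × Can₀ ⊆ ℝ²`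
equals `2·log 2 / log 3`. -/
theorem stmt_15 :
    dimH (Can0 ×ˢ Can0 : Set (ℝ × ℝ)) =
      ENNReal.ofReal (2 * Real.log 2 / Real.log 3) := by
  exact Stmt15Aux.final
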